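/- Let $X$ and $Q$ be operators on a finite-dimensional Hilbert space with $0 \le X \le I$ and $0 \le Q \le I$ (positive semidefinite contractions). Then $\frac{1}{2} Q^{1/2} X Q^{1/2} \le I - Q + X$. -/

import Mathlib

open Matrix
open scoped ComplexOrder

noncomputable def Matrix.PosSemidef.sqrt {n : Type*} [Fintype n] [DecidableEq n] {𝕜 : Type*} [RCLike 𝕜]
    {A : Matrix n n 𝕜} (hA : A.PosSemidef) : Matrix n n 𝕜 :=
  hA.1.eigenvectorUnitary.1 * diagonal ((↑) ∘ (√·) ∘ hA.1.eigenvalues) *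
    (star hA.1.eigenvectorUnitary : Matrix n n 𝕜)

noncomputable def matAbs {m : ℕ} (A : Matrix (Fin m) (Fin m) ℂ) : Matrix (Fin m) (Fin m) ℂ :=
  (Matrix.posSemidef_conjTranspose_mul_self A).sqrt

noncomputable def traceNorm {m : ℕ} (A : Matrix (Fin m) (Fin m) ℂ) : ℝ :=
  ((matAbs A).trace).re

open Classical in
noncomputable def psdSqrt {m : ℕ} (A : Matrix (Fin m) (Fin m) ℂ) : Matrix (Fin m) (Fin m) ℂ :=
  if h : A.PosSemidef then h.sqrt else 0

noncomputable def fid {m : ℕ} (A B : Matrix (Fin m) (Fin m) ℂ) : ℝ :=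
  traceNorm (psdSqrt A * psdSqrt B)

noncomputable def matPosPart {m : ℕ} (A : Matrix (Fin m) (Fin m) ℂ) : Matrix (Fin m) (Fin m) ℂ :=
  (2⁻¹ : ℂ) • (matAbs A + A)

noncomputable def matNegPart {m : ℕ} (A : Matrix (Fin m) (Fin m) ℂ) : Matrix (Fin m) (Fin m) ℂ :=
  (2⁻¹ : ℂ) • (matAbs A - A)


lemma inner_piLp_equiv_symm' {d : ℕ} (u v : Fin d → ℂ) :
    inner ℂ ((WithLp.equiv 2 (Fin d → ℂ)).symm u) ((WithLp.equiv 2 (Fin d → ℂ)).symm v) =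
      star u ⬝ᵥ v := by
  change dotProduct v (star u) = _
  exact dotProduct_comm _ _

lemma psd_sqrt_mul_self' {d : ℕ} {A : Matrix (Fin d) (Fin d) ℂ} (hA : A.PosSemidef) :
    hA.sqrt * hA.sqrt = A := by
  have hU : (star hA.1.eigenvectorUnitary : Matrix (Fin d) (Fin d) ℂ) * hA.1.eigenvectorUnitary.1 = 1 :=
    Unitary.coe_star_mul_self _
  conv_rhs => rw [hA.1.spectral_theorem, Unitary.conjStarAlgAut_apply]
  unfold Matrix.PosSemidef.sqrt
  rw [show ∀ a b c e f g : Matrix (Fin d) (Fin d) ℂ, a * b * c * (e * f * g) = a * (b * (c * e) * f) * g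
    from fun a b c e f g => by simp only [mul_assoc], hU, mul_one, diagonal_mul_diagonal]
  congr 3
  funext i
  simp only [Function.comp_apply]
  rw [← RCLike.ofReal_mul, Real.mul_self_sqrt (hA.eigenvalues_nonneg i)]

lemma psd_sqrt_psd' {d : ℕ} {A : Matrix (Fin d) (Fin d) ℂ} (hA : A.PosSemidef) :
    hA.sqrt.PosSemidef := by
  unfold Matrix.PosSemidef.sqrt
  have h := (Matrix.PosSemidef.diagonal (n := Fin d) (R := ℂ)
    (d := (↑) ∘ (√·) ∘ hA.1.eigenvalues) (fun i => by
      simp only [Function.comp_apply, Pi.zero_apply]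
      exact_mod_cast Real.sqrt_nonneg _)).mul_mul_conjTranspose_same hA.1.eigenvectorUnitary.1
  rw [Matrix.star_eq_conjTranspose]
  exact h

lemma dot_cs {d : ℕ} (u v : Fin d → ℂ) :
    ‖star u ⬝ᵥ v‖ ^ 2 ≤ (star u ⬝ᵥ u).re * (star v ⬝ᵥ v).re := by
  have h := norm_inner_le_norm (𝕜 := ℂ) ((WithLp.equiv 2 (Fin d → ℂ)).symm u)
    ((WithLp.equiv 2 (Fin d → ℂ)).symm v)
  rw [inner_piLp_equiv_symm'] at h
  have hu : ‖(WithLp.equiv 2 (Fin d → ℂ)).symm u‖ ^ 2 = (star u ⬝ᵥ u).re := by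
    rw [InnerProductSpace.norm_sq_eq_re_inner (𝕜 := ℂ), inner_piLp_equiv_symm', RCLike.re_to_complex]
  have hv : ‖(WithLp.equiv 2 (Fin d → ℂ)).symm v‖ ^ 2 = (star v ⬝ᵥ v).re := by
    rw [InnerProductSpace.norm_sq_eq_re_inner (𝕜 := ℂ), inner_piLp_equiv_symm', RCLike.re_to_complex]
  calc ‖star u ⬝ᵥ v‖ ^ 2 ≤ (‖(WithLp.equiv 2 (Fin d → ℂ)).symm u‖ * ‖(WithLp.equiv 2 (Fin d → ℂ)).symm v‖) ^ 2 := by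
        apply pow_le_pow_left₀ (norm_nonneg _) h
    _ = (star u ⬝ᵥ u).re * (star v ⬝ᵥ v).re := by rw [mul_pow, hu, hv]

lemma psd_one_sub {d : ℕ} {S : Matrix (Fin d) (Fin d) ℂ} (hS : S.PosSemidef)
    (h : (1 - S * S).PosSemidef) : (1 - S).PosSemidef := by
  refine Matrix.PosSemidef.of_dotProduct_mulVec_nonneg (Matrix.isHermitian_one.sub hS.1) fun x => ?_
  have hb : (0:ℂ) ≤ star x ⬝ᵥ (S *ᵥ x) := hS.dotProduct_mulVec_nonneg x
  have hn : (0:ℂ) ≤ star x ⬝ᵥ x := dotProduct_star_self_nonneg x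
  have hyy : star (S *ᵥ x) ⬝ᵥ (S *ᵥ x) = star x ⬝ᵥ ((S * S) *ᵥ x) := by
    rw [Matrix.star_mulVec, ← Matrix.mulVec_mulVec, Matrix.dotProduct_mulVec, hS.1.eq]
    simp [Matrix.dotProduct_mulVec]
  have hq : (star x ⬝ᵥ ((S * S) *ᵥ x)).re ≤ (star x ⬝ᵥ x).re := by
    have := h.dotProduct_mulVec_nonneg x
    rw [Matrix.sub_mulVec, dotProduct_sub, Matrix.one_mulVec, Complex.le_def] at this
    simpa using this.1
  have hq0 : 0 ≤ (star x ⬝ᵥ ((S * S) *ᵥ x)).re := by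
    rw [← hyy]
    have h0 := dotProduct_star_self_nonneg (S *ᵥ x)
    rw [Complex.le_def] at h0
    simpa using h0.1
  have hcs := dot_cs x (S *ᵥ x)
  rw [hyy] at hcs
  have hbre : ‖star x ⬝ᵥ (S *ᵥ x)‖ = (star x ⬝ᵥ (S *ᵥ x)).re := by
    rw [Complex.le_def] at hb
    rw [Complex.norm_def, Complex.normSq_apply, ← hb.2]
    simp only [Complex.zero_im, mul_zero, add_zero]
    exact Real.sqrt_mul_self (by simpa using hb.1)
  rw [Matrix.sub_mulVec, dotProduct_sub, Matrix.one_mulVec, Complex.le_def]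
  constructor
  · simp only [Complex.sub_re, Complex.zero_re, sub_nonneg]
    rw [Complex.le_def] at hb hn
    rw [hbre] at hcs
    nlinarith [hb.1, hn.1, hq, hq0, hcs]
  · rw [Complex.le_def] at hb hn
    simp only [Complex.sub_im]
    rw [← hb.2, ← hn.2]
    simp

lemma psd_half_smul {d : ℕ} {A : Matrix (Fin d) (Fin d) ℂ} (hA : A.PosSemidef) :
    ((2⁻¹ : ℂ) • A).PosSemidef := by
  refine Matrix.PosSemidef.of_dotProduct_mulVec_nonneg ?_ fun x => ?_
  · unfold Matrix.IsHermitian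
    rw [Matrix.conjTranspose_smul, hA.1.eq]
    norm_num
  · rw [Matrix.smul_mulVec, dotProduct_smul]
    have h2 : (0:ℂ) ≤ (2⁻¹ : ℂ) := by
      rw [Complex.le_def]; norm_num
    exact mul_nonneg h2 (hA.dotProduct_mulVec_nonneg x)

lemma psd_sub_sq {d : ℕ} {S : Matrix (Fin d) (Fin d) ℂ} (hS : S.PosSemidef)
    (h1S : (1 - S).PosSemidef) : (S - S * S).PosSemidef := by
  obtain ⟨R, hRH, hRR⟩ : ∃ R : Matrix (Fin d) (Fin d) ℂ, Rᴴ = R ∧ R * R = S :=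
    ⟨hS.sqrt, (psd_sqrt_psd' hS).1, psd_sqrt_mul_self' hS⟩
  have h := h1S.conjTranspose_mul_mul_same R
  have e : Rᴴ * (1 - S) * R = S - S * S := by
    rw [hRH, ← hRR]
    noncomm_ring
  rwa [e] at h

theorem nussbaum_povm_lemma {d : ℕ} (X Q : Matrix (Fin d) (Fin d) ℂ)
    (hX : X.PosSemidef) (hX1 : (1 - X).PosSemidef)
    (hQ : Q.PosSemidef) (hQ1 : (1 - Q).PosSemidef) :
    (1 - Q + X - (2⁻¹ : ℂ) • (hQ.sqrt * X * hQ.sqrt)).PosSemidef := by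
  have hgen : ∀ S : Matrix (Fin d) (Fin d) ℂ, S.PosSemidef → S * S = Q →
      (1 - Q + X - (2⁻¹ : ℂ) • (S * X * S)).PosSemidef := by
    intro S hS hSS
    have h1S : (1 - S).PosSemidef := psd_one_sub hS (by rw [hSS]; exact hQ1)
    have hSQ : (S - Q).PosSemidef := by
      have := psd_sub_sq hS h1S
      rwa [hSS] at this
    have h2H : (2 - S : Matrix (Fin d) (Fin d) ℂ)ᴴ = 2 - S := by
      rw [Matrix.conjTranspose_sub, hS.1.eq]
      simp
    have h1H : (1 - S : Matrix (Fin d) (Fin d) ℂ)ᴴ = 1 - S := h1S.1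
    have hA : ((2 - S) * X * (2 - S)).PosSemidef := by
      have := hX.conjTranspose_mul_mul_same (2 - S)
      rwa [h2H] at this
    have hB : ((1 - S) * (1 - X) * (1 - S)).PosSemidef := by
      have := hX1.conjTranspose_mul_mul_same (1 - S)
      rwa [h1H] at this
    set H : Matrix (Fin d) (Fin d) ℂ :=
      (2 - S) * X * (2 - S) + (((1 - S) * (1 - X) * (1 - S)) + ((1 - S) * (1 - X) * (1 - S)))
        + (((S - Q) + (S - Q)) + ((S - Q) + (S - Q))) with hHdef
    have hH : H.PosSemidef :=
      (hA.add (hB.add hB)).add ((hSQ.add hSQ).add (hSQ.add hSQ))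
    have key : 1 - Q + X - (2⁻¹ : ℂ) • (S * X * S) = (2⁻¹ : ℂ) • H := by
      have hid : H = (2:ℂ) • (1 - Q + X) - S * X * S := by
        rw [hHdef, two_smul, ← hSS]
        noncomm_ring
      rw [hid, smul_sub, smul_smul]
      norm_num
    rw [key]
    exact psd_half_smul hH
  exact hgen hQ.sqrt (psd_sqrt_psd' hQ) (psd_sqrt_mul_self' hQ)
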